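/- Let w ∈ Sₙ and let h be a contiguous subword of w of length c whose values are c consecutive integers, with h right leaning. If the letters of any contiguous subword of h are sorted into increasing order (in place), the resulting length-c subword is still right leaning. -/

import Mathlib

/-- A word with distinct letters is right leaning if for some `k` less than its
length, the first `k` letters are the `k` smallest values. -/
def RightLeaningW (v : List ℕ) : Prop :=
  ∃ k : ℕ, 1 ≤ k ∧ k < v.length ∧ ∀ x ∈ v.take k, ∀ y ∈ v.drop k, x < y

/-- Splitting a sorted permutation of `l1 ++ l2`, where every letter of `l1` is
less than every letter of `l2`, at position `l1.length` gives permutations of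
`l1` and `l2`. -/
lemma sorted_split (l1 l2 s : List ℕ) (hp : s.Perm (l1 ++ l2))
    (hsort : s.Pairwise (· < ·))
    (hlt : ∀ x ∈ l1, ∀ y ∈ l2, x < y) :
    (s.take l1.length).Perm l1 ∧ (s.drop l1.length).Perm l2 := by
  have hnd : (l1 ++ l2).Nodup := hp.nodup_iff.mp hsort.nodup
  have h1 : l1.Nodup := (List.sublist_append_left l1 l2).nodup hnd
  have h2 : l2.Nodup := (List.sublist_append_right l1 l2).nodup hnd
  set u1 := l1.insertionSort (· ≤ ·) with hu1
  set u2 := l2.insertionSort (· ≤ ·) with hu2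
  have p1 : u1.Perm l1 := List.perm_insertionSort _ _
  have p2 : u2.Perm l2 := List.perm_insertionSort _ _
  have s1 : u1.Pairwise (· < ·) :=
    ((List.pairwise_insertionSort _ _).and (p1.nodup_iff.mpr h1)).imp fun h => lt_of_le_of_ne h.1 h.2
  have s2 : u2.Pairwise (· < ·) :=
    ((List.pairwise_insertionSort _ _).and (p2.nodup_iff.mpr h2)).imp fun h => lt_of_le_of_ne h.1 h.2
  have hsorted12 : (u1 ++ u2).Pairwise (· < ·) := by
    rw [List.pairwise_append]
    exact ⟨s1, s2, fun x hx y hy => hlt x (p1.subset hx) y (p2.subset hy)⟩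
  have hperm12 : s.Perm (u1 ++ u2) := hp.trans ((p1.append p2).symm)
  have heq : s = u1 ++ u2 := hperm12.eq_of_pairwise (fun _ _ _ _ h1 h2 => absurd (h1.trans h2) (lt_irrefl _)) hsort hsorted12
  have hlen1 : u1.length = l1.length := p1.length_eq
  constructor
  · rw [heq, ← hlen1, List.take_left]; exact p1
  · rw [heq, ← hlen1, List.drop_left]; exact p2

/-- Sorting a contiguous subword of a right leaning hit (a length-`c` word whose
values are `c` consecutive integers) into increasing order, in place, yields a
right leaning word. -/
theorem stmt18 (c : ℕ) (hc : 2 ≤ c) (h h' s : List ℕ) (hlen : h.length = c)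
    (m : ℕ) (hhit : h.Perm (List.range' m c))
    (hRL : RightLeaningW h)
    (a b : ℕ) (hab : a + b ≤ c)
    (hs : s.Perm ((h.drop a).take b)) (hsorted : s.Pairwise (· < ·))
    (hh' : h' = h.take a ++ s ++ h.drop (a + b)) :
    RightLeaningW h' := by
  obtain ⟨k, hk1, hkc, hko⟩ := hRL
  have hka' : k < c := by rwa [hlen] at hkc
  have hslen : s.length = b := by
    rw [hs.length_eq, List.length_take, List.length_drop, hlen]
    omega
  have hlen' : h'.length = h.length := by
    subst hh'
    simp only [List.length_append, List.length_take, List.length_drop, hslen, hlen]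
    omega
  -- reduce to showing the two halves are permuted
  suffices hperm : (h'.take k).Perm (h.take k) ∧ (h'.drop k).Perm (h.drop k) by
    exact ⟨k, hk1, by rw [hlen']; exact hkc,
      fun x hx y hy => hko x (hperm.1.subset hx) y (hperm.2.subset hy)⟩
  have hta : (h.take a).length = a := by rw [List.length_take, hlen]; omega
  have hdecomp : h.drop a = (h.drop a).take b ++ h.drop (a + b) := by
    conv_lhs => rw [← List.take_append_drop b (h.drop a)]
    rw [List.drop_drop]
  subst hh'
  by_cases hka : k ≤ a
  · -- the sorted segment lies entirely after position k
    constructor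
    · rw [List.append_assoc, List.take_append_of_le_length (by omega),
        List.take_take, min_eq_left hka]
    · rw [List.append_assoc, List.drop_append_of_le_length (by omega)]
      conv_rhs => rw [← List.take_append_drop a h,
        List.drop_append_of_le_length (by omega), hdecomp]
      exact (List.Perm.append_left _ (hs.append_right _))
  by_cases hbk : a + b ≤ k
  · -- the sorted segment lies entirely before position k
    have hlas : (h.take a ++ s).length = a + b := by
      rw [List.length_append, hta, hslen]
    constructor
    · rw [List.take_append, hlas, List.take_of_length_le (by rw [hlas]; omega)]
      conv_rhs => rw [show k = a + (b + (k - (a + b))) by omega, List.take_add,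
        List.take_add, List.drop_drop]
      rw [List.append_assoc]
      exact List.Perm.append_left _ (hs.append_right _)
    · rw [List.drop_append, hlas,
        List.drop_eq_nil_of_le (by rw [hlas]; omega), List.nil_append,
        List.drop_drop, show a + b + (k - (a + b)) = k by omega]
  · -- the sorted segment straddles position k
    push_neg at hka hbk
    set seg1 := (h.drop a).take (k - a) with hseg1
    set seg2 := (h.drop k).take (a + b - k) with hseg2
    have hdk : (h.drop a).drop (k - a) = h.drop k := by
      rw [List.drop_drop, show a + (k - a) = k by omega]
    have hsegsplit : (h.drop a).take b = seg1 ++ seg2 := by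
      rw [show b = (k - a) + (a + b - k) by omega, List.take_add, hdk]
    have htk : h.take k = h.take a ++ seg1 := by
      rw [show k = a + (k - a) by omega, List.take_add]
    have hl1 : seg1.length = k - a := by
      rw [hseg1, List.length_take, List.length_drop, hlen]; omega
    have hdk2 : h.drop k = seg2 ++ h.drop (a + b) := by
      rw [← hdk]
      conv_lhs => rw [hdecomp, hsegsplit]
      rw [List.append_assoc, ← hl1, List.drop_left]
    have hlt : ∀ x ∈ seg1, ∀ y ∈ seg2, x < y := by
      intro x hx y hy
      exact hko x (htk ▸ List.mem_append_right _ hx)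
        y ((List.take_sublist _ _).subset hy)
    obtain ⟨hp1, hp2⟩ := sorted_split seg1 seg2 s (hs.trans (hsegsplit ▸ List.Perm.refl _))
      hsorted hlt
    rw [hl1] at hp1 hp2
    constructor
    · rw [List.append_assoc, List.take_append, hta,
        List.take_of_length_le (by rw [hta]; omega),
        List.take_append_of_le_length (by rw [hslen]; omega), htk]
      exact List.Perm.append_left _ hp1
    · rw [List.append_assoc, List.drop_append, hta,
        List.drop_eq_nil_of_le (by rw [hta]; omega), List.nil_append,
        List.drop_append_of_le_length (by rw [hslen]; omega), hdk2]
      exact hp2.append_right _
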